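/- The 2-adic power series T_2(z) = Σ_{n≥1} C_{n-1} z^{-(2n-1)} (where C_k are Catalan numbers) converges for all z in an unramified extension of ℚ_2 with |z|_2 ≥ 2, and its value T_2(z) satisfies T_2(z)^2 − z·T_2(z) + 1 = 0 and 0 < |T_2(z)|_2 ≤ 1/2. -/

import Mathlib

open Filter Finset

/-- In an ultrametric normed field, a family whose terms tend to zero along `cofinite`
and whose partial sums all lie in a complete set is summable. -/
lemma summable_of_complete_of_tendsto_cofinite {ι K : Type*} [NormedField K]
    [IsUltrametricDist K] {g : ι → K} {S : Set K} (hS : IsComplete S)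
    (hmem : ∀ s : Finset ι, ∑ i ∈ s, g i ∈ S)
    (h0 : Tendsto g cofinite (nhds 0)) : Summable g := by
  have hc : CauchySeq (fun s : Finset ι => ∑ i ∈ s, g i) := by
    rw [cauchySeq_finset_iff_vanishing_norm]
    intro ε hε
    have hfin := Filter.eventually_cofinite.1
      (h0 (Metric.ball_mem_nhds (0 : K) (half_pos hε)))
    refine ⟨hfin.toFinset, fun t ht => ?_⟩
    have hb : ∀ i ∈ t, ‖g i‖ ≤ ε / 2 := by
      intro i hi
      have h1 : i ∉ hfin.toFinset := fun h => (Finset.disjoint_left.1 ht hi) h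
      rw [Set.Finite.mem_toFinset] at h1
      simp only [Set.mem_setOf_eq, not_not, Metric.mem_ball, dist_zero_right] at h1
      exact le_of_lt h1
    calc ‖∑ i ∈ t, g i‖ ≤ ε / 2 :=
          IsUltrametricDist.norm_sum_le_of_forall_le_of_nonneg (by positivity) hb
      _ < ε := by linarith
  obtain ⟨c, _, hle⟩ := hS _ hc (by
    refine Filter.le_principal_iff.2 (Filter.mem_map.2 ?_)
    exact Filter.univ_mem' fun s => hmem s)
  exact ⟨c, hle⟩

theorem stmt_8 (K : Type*) [NormedField K] [IsUltrametricDist K] [NormedAlgebra ℚ_[2] K]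
    (halg : Algebra.IsAlgebraic ℚ_[2] K)
    (hiso : ∀ q : ℚ_[2], ‖algebraMap ℚ_[2] K q‖ = ‖q‖)
    (hval : ∀ x : K, x ≠ 0 → ∃ n : ℤ, ‖x‖ = 2 ^ n) :
    ∀ z : K, 2 ≤ ‖z‖ →
      ∃ w : K,
        HasSum (fun n : ℕ => (catalan n : K) * (z⁻¹) ^ (2 * n + 1)) w ∧
        w ^ 2 - z * w + 1 = 0 ∧ 0 < ‖w‖ ∧ ‖w‖ ≤ 1 / 2 := by
  intro z hz2
  have hz0 : z ≠ 0 := by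
    intro h; rw [h, norm_zero] at hz2; linarith
  set t : K := z⁻¹ with ht
  have ht0 : t ≠ 0 := inv_ne_zero hz0
  have htpos : 0 < ‖t‖ := norm_pos_iff.2 ht0
  have hthalf : ‖t‖ ≤ 1 / 2 := by
    rw [ht, norm_inv]
    rw [inv_le_comm₀ (by linarith : (0:ℝ) < ‖z‖) (by norm_num : (0:ℝ) < 1/2)]
    · norm_num; linarith
  have ht1 : ‖t‖ ≤ 1 := by linarith
  -- the complete subfield
  set L : IntermediateField ℚ_[2] K := IntermediateField.adjoin ℚ_[2] {z} with hL
  have hint : IsIntegral ℚ_[2] z := (halg.isAlgebraic z).isIntegral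
  haveI : FiniteDimensional ℚ_[2] L := IntermediateField.adjoin.finiteDimensional hint
  set S : Submodule ℚ_[2] K := Subalgebra.toSubmodule L.toSubalgebra with hS
  haveI : FiniteDimensional ℚ_[2] S := inferInstanceAs (FiniteDimensional ℚ_[2] L)
  have hScomp : IsComplete (S : Set K) := S.complete_of_finiteDimensional
  have hzL : z ∈ L := IntermediateField.mem_adjoin_simple_self ℚ_[2] z
  have htL : t ∈ L := L.inv_mem hzL
  -- the series
  set f : ℕ → K := fun n => (catalan n : K) * t ^ (2 * n + 1) with hf
  have hfL : ∀ n, f n ∈ L := by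
    intro n
    show (catalan n : K) * t ^ (2 * n + 1) ∈ L
    exact mul_mem (L.natCast_mem _) (pow_mem htL _)
  have hcat : ∀ n : ℕ, ‖(catalan n : K)‖ ≤ 1 := fun n =>
    IsUltrametricDist.norm_natCast_le_one K (catalan n)
  have hfb : ∀ n, ‖f n‖ ≤ ‖t‖ ^ (2 * n + 1) := by
    intro n
    calc ‖f n‖ ≤ ‖(catalan n : K)‖ * ‖t ^ (2*n+1)‖ := norm_mul_le _ _
      _ ≤ 1 * ‖t‖ ^ (2*n+1) := by
          rw [norm_pow]
          exact mul_le_mul_of_nonneg_right (hcat n) (by positivity)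
      _ = ‖t‖ ^ (2*n+1) := one_mul _
  have hfb2 : ∀ n, ‖f n‖ ≤ (1/2 : ℝ) ^ n := by
    intro n
    refine (hfb n).trans ?_
    calc ‖t‖ ^ (2*n+1) ≤ ‖t‖ ^ n :=
          pow_le_pow_of_le_one (norm_nonneg t) ht1 (by omega)
      _ ≤ (1/2:ℝ) ^ n := pow_le_pow_left₀ (norm_nonneg t) hthalf n
  have hsf : Summable f := by
    refine summable_of_complete_of_tendsto_cofinite hScomp
      (fun s => Submodule.sum_mem S fun n _ => (Subalgebra.mem_toSubmodule _).2 (hfL n)) ?_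
    rw [Nat.cofinite_eq_atTop]
    refine squeeze_zero_norm hfb2 ?_
    exact tendsto_pow_atTop_nhds_zero_of_lt_one (by norm_num) (by norm_num)
  set w : K := ∑' n, f n with hw
  have hws : HasSum f w := hsf.hasSum
  -- the product family
  have hfg : Summable (fun x : ℕ × ℕ => f x.1 * f x.2) := by
    refine summable_of_complete_of_tendsto_cofinite hScomp
      (fun s => Submodule.sum_mem S fun p _ => (Subalgebra.mem_toSubmodule _).2
        (L.mul_mem (hfL p.1) (hfL p.2))) ?_
    rw [Metric.tendsto_nhds]
    intro ε hε
    obtain ⟨N, hN⟩ := exists_pow_lt_of_lt_one hε (by norm_num : (1/2:ℝ) < 1)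
    rw [Filter.eventually_cofinite]
    refine Set.Finite.subset ((Set.finite_Iio N).prod (Set.finite_Iio N)) ?_
    intro p hp
    simp only [Set.mem_setOf_eq, dist_zero_right, not_lt] at hp
    by_contra hmem
    simp only [Set.mem_prod, Set.mem_Iio, not_and_or, not_lt] at hmem
    have hle1 : ‖f p.1‖ ≤ 1 := (hfb2 p.1).trans (pow_le_one₀ (by norm_num) (by norm_num))
    have hle2 : ‖f p.2‖ ≤ 1 := (hfb2 p.2).trans (pow_le_one₀ (by norm_num) (by norm_num))
    have key : ‖f p.1 * f p.2‖ < ε := by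
      rcases hmem with hN1 | hN2
      · calc ‖f p.1 * f p.2‖ ≤ ‖f p.1‖ * ‖f p.2‖ := norm_mul_le _ _
          _ ≤ (1/2:ℝ) ^ p.1 * 1 :=
              mul_le_mul (hfb2 p.1) hle2 (norm_nonneg _) (by positivity)
          _ = (1/2:ℝ) ^ p.1 := mul_one _
          _ ≤ (1/2:ℝ) ^ N := pow_le_pow_of_le_one (by norm_num) (by norm_num) hN1
          _ < ε := hN
      · calc ‖f p.1 * f p.2‖ ≤ ‖f p.1‖ * ‖f p.2‖ := norm_mul_le _ _
          _ ≤ 1 * ((1/2:ℝ) ^ p.2) :=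
              mul_le_mul hle1 (hfb2 p.2) (norm_nonneg _) (by norm_num)
          _ = (1/2:ℝ) ^ p.2 := one_mul _
          _ ≤ (1/2:ℝ) ^ N := pow_le_pow_of_le_one (by norm_num) (by norm_num) hN2
          _ < ε := hN
    exact absurd hp (not_le.2 key)
  -- Cauchy product
  have hzt : z * t = 1 := mul_inv_cancel₀ hz0
  have hdiag : ∀ n : ℕ, ∑ kl ∈ antidiagonal n, f kl.1 * f kl.2
      = (catalan (n+1) : K) * t ^ (2 * n + 2) := by
    intro n
    have hterm : ∀ kl ∈ antidiagonal n, f kl.1 * f kl.2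
        = ((catalan kl.1 * catalan kl.2 : ℕ) : K) * t ^ (2 * n + 2) := by
      intro kl hkl
      rw [Finset.HasAntidiagonal.mem_antidiagonal] at hkl
      simp only [hf, Nat.cast_mul]
      have he : 2 * kl.1 + 1 + (2 * kl.2 + 1) = 2 * n + 2 := by omega
      rw [← he, pow_add]
      ring
    rw [Finset.sum_congr rfl hterm, ← Finset.sum_mul, ← Nat.cast_sum, ← catalan_succ']
  have hmul : w * w = ∑' n : ℕ, (catalan (n+1) : K) * t ^ (2 * n + 2) := by
    rw [hw, Summable.tsum_mul_tsum_eq_tsum_sum_antidiagonal hsf hsf hfg]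
    exact tsum_congr hdiag
  set h : ℕ → K := fun n => (catalan n : K) * t ^ (2 * n) with hh
  have hhf : h = fun n => z * f n := by
    funext n
    simp only [hh, hf]
    calc (catalan n : K) * t ^ (2*n) = (catalan n : K) * (t ^ (2*n) * (z * t)) := by
          rw [hzt, mul_one]
      _ = z * ((catalan n : K) * t ^ (2*n+1)) := by rw [pow_succ]; ring
  have hhs : HasSum h (z * w) := hhf ▸ hws.mul_left z
  have hsh : Summable h := ⟨z * w, hhs⟩
  have h0' : h 0 = 1 := by simp [hh]
  have hshift : ∑' n : ℕ, h (n+1) = ∑' n : ℕ, (catalan (n+1) : K) * t ^ (2 * n + 2) := by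
    refine tsum_congr fun n => ?_
    simp only [hh]
    have he : 2 * (n + 1) = 2 * n + 2 := by ring
    rw [he]
  have hzw : z * w = 1 + w * w := by
    rw [← hhs.tsum_eq, Summable.tsum_eq_zero_add hsh, h0', hshift, hmul]
  -- norm of w
  have hf0 : f 0 = t := by simp [hf]
  have htail : w = t + ∑' n : ℕ, f (n+1) := by
    rw [hw, Summable.tsum_eq_zero_add hsf, hf0]
  have hrb : ‖∑' n : ℕ, f (n+1)‖ ≤ ‖t‖ ^ 3 := by
    refine IsUltrametricDist.norm_tsum_le_of_forall_le_of_nonneg (by positivity) fun n => ?_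
    refine (hfb (n+1)).trans ?_
    exact pow_le_pow_of_le_one (norm_nonneg t) ht1 (by omega)
  have hrlt : ‖∑' n : ℕ, f (n+1)‖ < ‖t‖ := by
    refine hrb.trans_lt ?_
    nlinarith [htpos, hthalf, mul_pos htpos htpos]
  have hwn : ‖w‖ = ‖t‖ := by
    rw [htail]
    rw [IsUltrametricDist.norm_add_eq_max_of_norm_ne_norm (ne_of_gt hrlt)]
    exact max_eq_left hrlt.le
  refine ⟨w, hws, ?_, ?_, ?_⟩
  · linear_combination -hzw
  · rw [hwn]; exact htpos
  · rw [hwn]; exact hthalf
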